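/- Let n ≥ 2 and 1 ≤ p ≤ n be integers, let s ≥ 0 be real, let κ ∈ ℝ^n with κ_1 = 1, and let (g_I)_{I ∈ J(p,n)} be nonnegative reals. Set Λ_I = ∑_{i∈I} κ_i and F^{ii} = ∑_{I ∋ i} g_I. Then s · ∑_{i=2}^n F^{ii} + ∑_{i=2}^n F^{ii} (κ_i − 1)² ≥ (1/p) ∑_I g_I Λ_I² − 2 ∑_I g_I Λ_I + (p−1)(1+s) ∑_I g_I + ∑_I g_I + s ∑_{I : 1 ∉ I} g_I. -/
import Mathlib


/-- The `k`-th elementary symmetric function of `x` restricted to the index set `s`. -/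
noncomputable def sigmaEOn {ι : Type*} [DecidableEq ι] (s : Finset ι) (k : ℕ) (x : ι → ℝ) : ℝ :=
  ∑ t ∈ s.powersetCard k, ∏ i ∈ t, x i

/-- The `k`-th elementary symmetric function `σ_k(x)`. -/
noncomputable def sigmaE {ι : Type*} [Fintype ι] [DecidableEq ι] (k : ℕ) (x : ι → ℝ) : ℝ :=
  sigmaEOn Finset.univ k x

/-- The Gårding cone `Γ_k ⊆ ℝ^n`. -/
def gardingCone (n k : ℕ) : Set (Fin n → ℝ) :=
  {lam | ∀ j : ℕ, 1 ≤ j → j ≤ k → 0 < sigmaE j lam}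

lemma perI_key (p : ℕ) (hp : 1 ≤ p) (s : ℝ) (hs : 0 ≤ s) {n : ℕ} (κ : Fin n → ℝ)
    (i0 : Fin n) (hκ : κ i0 = 1) (t : Finset (Fin n)) (ht : t.card = p)
    (g : ℝ) (hg : 0 ≤ g) :
    (1 / (p : ℝ)) * (g * (∑ i ∈ t, κ i) ^ 2) - 2 * (g * (∑ i ∈ t, κ i))
      + ((p : ℝ) - 1) * (1 + s) * g + g + s * (if i0 ∉ t then g else 0)
    ≤ s * (g * ((t.erase i0).card : ℝ)) + g * ∑ i ∈ t.erase i0, (κ i - 1) ^ 2 := by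
  have hp0 : (0:ℝ) < p := by exact_mod_cast hp
  have hsum : ∑ i ∈ t, κ i = (p : ℝ) + ∑ i ∈ t, (κ i - 1) := by
    rw [Finset.sum_sub_distrib]
    simp [ht]
  have hcs : (∑ i ∈ t, (κ i - 1)) ^ 2 ≤ (p : ℝ) * ∑ i ∈ t, (κ i - 1) ^ 2 := by
    have := sq_sum_le_card_mul_sum_sq (s := t) (f := fun i => κ i - 1)
    simpa [ht] using this
  have hD2 : (1 / (p : ℝ)) * (∑ i ∈ t, κ i) ^ 2 - 2 * (∑ i ∈ t, κ i) + (p : ℝ)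
      ≤ ∑ i ∈ t, (κ i - 1) ^ 2 := by
    set D := ∑ i ∈ t, (κ i - 1) with hD
    have key : (1 / (p : ℝ)) * ((p : ℝ) + D) ^ 2 - 2 * ((p : ℝ) + D) + (p : ℝ)
        = D ^ 2 / p := by field_simp; ring
    rw [hsum, key, div_le_iff₀ hp0]
    linarith [hcs]
  by_cases h : i0 ∈ t
  · have he : ∑ i ∈ t.erase i0, (κ i - 1) ^ 2 = ∑ i ∈ t, (κ i - 1) ^ 2 :=
      Finset.sum_erase _ (by simp [hκ])
    have hc : ((t.erase i0).card : ℝ) = (p : ℝ) - 1 := by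
      rw [Finset.card_erase_of_mem h, ht, Nat.cast_sub hp]; simp
    rw [he, hc, if_neg (by simpa using h)]
    nlinarith [mul_le_mul_of_nonneg_left hD2 hg, mul_nonneg hs hg]
  · have he : t.erase i0 = t := Finset.erase_eq_of_notMem h
    rw [he, if_pos h, ht]
    nlinarith [mul_le_mul_of_nonneg_left hD2 hg, mul_nonneg hs hg]

/-- the key algebraic inequality in the gradient estimate. Here
`i0` is the first index (where `κ_{i0} = 1`), `g_I ≥ 0`, `Λ_I = ∑_{i∈I} κ_i` and
`F^{ii} = ∑_{I ∋ i} g_I`. -/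
theorem gradient_key_inequality (n p : ℕ) (hn : 2 ≤ n) (hp1 : 1 ≤ p) (hpn : p ≤ n)
    (s : ℝ) (hs : 0 ≤ s) (κ : Fin n → ℝ) (i0 : Fin n) (hi0 : (i0 : ℕ) = 0)
    (hκ1 : κ i0 = 1)
    (g : {t : Finset (Fin n) // t.card = p} → ℝ) (hg : ∀ I, 0 ≤ g I) :
    (1 / (p : ℝ)) * ∑ I : {t : Finset (Fin n) // t.card = p}, g I * (∑ i ∈ I.1, κ i) ^ 2
      - 2 * ∑ I : {t : Finset (Fin n) // t.card = p}, g I * (∑ i ∈ I.1, κ i)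
      + ((p : ℝ) - 1) * (1 + s) * ∑ I : {t : Finset (Fin n) // t.card = p}, g I
      + ∑ I : {t : Finset (Fin n) // t.card = p}, g I
      + s * ∑ I ∈ Finset.univ.filter
          (fun I : {t : Finset (Fin n) // t.card = p} => i0 ∉ I.1), g I
    ≤ s * ∑ i ∈ Finset.univ.erase i0,
          (∑ I ∈ Finset.univ.filter
            (fun I : {t : Finset (Fin n) // t.card = p} => i ∈ I.1), g I)
      + ∑ i ∈ Finset.univ.erase i0,
          (∑ I ∈ Finset.univ.filter
            (fun I : {t : Finset (Fin n) // t.card = p} => i ∈ I.1), g I) * (κ i - 1) ^ 2 := by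
  have hinter : ∀ I : {t : Finset (Fin n) // t.card = p},
      (Finset.univ.erase i0) ∩ I.1 = I.1.erase i0 := by
    intro I; ext i; simp [Finset.mem_erase, and_comm]
  have hswap1 : ∑ i ∈ Finset.univ.erase i0,
        (∑ I ∈ Finset.univ.filter
          (fun I : {t : Finset (Fin n) // t.card = p} => i ∈ I.1), g I)
      = ∑ I : {t : Finset (Fin n) // t.card = p}, g I * ((I.1.erase i0).card : ℝ) := by
    simp only [Finset.sum_filter]
    rw [Finset.sum_comm]
    refine Finset.sum_congr rfl fun I _ => ?_
    rw [Finset.sum_ite_mem, hinter I, Finset.sum_const, nsmul_eq_mul, mul_comm]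
  have hswap2 : ∑ i ∈ Finset.univ.erase i0,
        (∑ I ∈ Finset.univ.filter
          (fun I : {t : Finset (Fin n) // t.card = p} => i ∈ I.1), g I) * (κ i - 1) ^ 2
      = ∑ I : {t : Finset (Fin n) // t.card = p},
          g I * ∑ i ∈ I.1.erase i0, (κ i - 1) ^ 2 := by
    simp only [Finset.sum_filter, Finset.sum_mul, ite_mul, zero_mul]
    rw [Finset.sum_comm]
    refine Finset.sum_congr rfl fun I _ => ?_
    rw [Finset.sum_ite_mem, hinter I, Finset.mul_sum]
  rw [hswap1, hswap2, Finset.sum_filter, Finset.mul_sum, Finset.mul_sum, Finset.mul_sum,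
    Finset.mul_sum, Finset.mul_sum, ← Finset.sum_sub_distrib,
    ← Finset.sum_add_distrib, ← Finset.sum_add_distrib, ← Finset.sum_add_distrib,
    ← Finset.sum_add_distrib]
  exact Finset.sum_le_sum fun I _ => perI_key p hp1 s hs κ i0 hκ1 I.1 I.2 (g I) (hg I)
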